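/- For every positive integer i and real α, the function x ↦ x^α · |ψ^(i)(x)| is strictly decreasing on (0, ∞) if and only if α ≤ i. -/

import Mathlib

noncomputable def digamma : ℝ → ℝ := deriv (fun x => Real.log (Real.Gamma x))

noncomputable def polygamma (i : ℕ) : ℝ → ℝ := iteratedDeriv i digamma

open Filter Topology

lemma hasDerivAt_neg_inv_pow (m : ℕ) (hm : 1 ≤ m) {t : ℝ} (ht0 : 0 < t) :
    HasDerivAt (fun t : ℝ => -(1 / t ^ m)) ((m : ℝ) / t ^ (m + 1)) t := by
  have h1 : HasDerivAt (fun t : ℝ => t ^ m) ((m : ℝ) * t ^ (m - 1)) t := by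
    simpa using hasDerivAt_pow m t
  have h2 := (h1.inv (pow_ne_zero _ ht0.ne')).neg
  have h3 : -(-((m : ℝ) * t ^ (m - 1)) / (t ^ m) ^ 2) = (m : ℝ) / t ^ (m + 1) := by
    rw [neg_div, neg_neg, ← pow_mul]
    rw [show m * 2 = (m - 1) + (m + 1) by omega, pow_add]
    rw [mul_div_assoc, div_mul_eq_div_div, div_self (pow_ne_zero _ ht0.ne'), mul_one_div]
  simp only [one_div]
  exact h3 ▸ h2

-- MVT-based elementary inequality
lemma pow_inv_diff_bounds {a b : ℝ} (ha : 0 < a) (hab : a < b) (m : ℕ) (hm : 1 ≤ m) :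
    (m : ℝ) * (b - a) / b ^ (m + 1) < 1 / a ^ m - 1 / b ^ m ∧
    1 / a ^ m - 1 / b ^ m < (m : ℝ) * (b - a) / a ^ (m + 1) := by
  have hcont : ContinuousOn (fun t : ℝ => -(1 / t ^ m)) (Set.Icc a b) := by
    apply ContinuousOn.neg
    apply ContinuousOn.div continuousOn_const (by fun_prop)
    intro t ht
    exact pow_ne_zero _ (ne_of_gt (lt_of_lt_of_le ha ht.1))
  obtain ⟨c, hc, hc'⟩ := exists_hasDerivAt_eq_slope (fun t => -(1 / t ^ m))
    (fun t => (m : ℝ) / t ^ (m + 1)) hab hcont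
    (fun t ht => hasDerivAt_neg_inv_pow m hm (ha.trans ht.1))
  have hba : 0 < b - a := by linarith
  have hslope : (1 / a ^ m - 1 / b ^ m) = (m : ℝ) / c ^ (m + 1) * (b - a) := by
    rw [hc', div_mul_cancel₀ _ hba.ne']
    ring
  have hc0 : 0 < c := ha.trans hc.1
  have hb0 : 0 < b := ha.trans hab
  have hm0 : (0:ℝ) < (m:ℝ) := by exact_mod_cast (by omega : 0 < m)
  constructor
  · rw [hslope]
    have : (m:ℝ)/b^(m+1) < (m:ℝ)/c^(m+1) := by gcongr; exact hc.2
    calc (m : ℝ) * (b - a) / b ^ (m + 1) = (m:ℝ)/b^(m+1) * (b-a) := by ring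
    _ < (m:ℝ)/c^(m+1) * (b-a) := by gcongr
  · rw [hslope]
    have : (m:ℝ)/c^(m+1) < (m:ℝ)/a^(m+1) := by gcongr; exact hc.1
    calc (m:ℝ)/c^(m+1) * (b-a) < (m:ℝ)/a^(m+1) * (b-a) := by gcongr
    _ = (m : ℝ) * (b - a) / a ^ (m + 1) := by ring

noncomputable def P (m : ℕ) (x : ℝ) : ℝ := ∑' n : ℕ, 1 / ((n : ℝ) + x) ^ m

lemma P_summable {m : ℕ} (hm : 2 ≤ m) {x : ℝ} (hx : 0 < x) :
    Summable (fun n : ℕ => 1 / ((n : ℝ) + x) ^ m) := by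
  rw [← summable_nat_add_iff 1]
  have h2 : Summable (fun n : ℕ => 1 / ((n : ℝ) + 1) ^ 2) := by
    have := Real.summable_one_div_nat_pow.mpr (le_refl 2)
    exact_mod_cast (summable_nat_add_iff 1).mpr this
  apply h2.of_nonneg_of_le (fun n => by positivity)
  intro n
  have h1 : ((n:ℝ) + 1) ≤ ((n + 1 : ℕ) : ℝ) + x := by push_cast; linarith
  have hn1 : (1:ℝ) ≤ (n:ℝ) + 1 := by
    have := Nat.cast_nonneg (α := ℝ) n; linarith
  apply one_div_le_one_div_of_le (by positivity)
  calc ((n:ℝ)+1)^2 ≤ (((n+1:ℕ):ℝ) + x)^2 := by gcongr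
  _ ≤ (((n+1:ℕ):ℝ) + x)^m := pow_le_pow_right₀ (by linarith) hm

lemma P_pos {m : ℕ} (hm : 2 ≤ m) {x : ℝ} (hx : 0 < x) : 0 < P m x :=
  Summable.tsum_pos (P_summable hm hx) (fun n => by positivity) 0 (by positivity)

lemma P_shift {m : ℕ} (hm : 2 ≤ m) {x : ℝ} (hx : 0 < x) :
    P m x = 1 / x ^ m + P m (x + 1) := by
  rw [P, Summable.tsum_eq_zero_add (P_summable hm hx)]
  push_cast
  congr 1
  · norm_num
  · rw [P]; congr 1; ext n; ring_nf

-- telescoping sum: for c n = 1/((n:ℝ)+x)^m, ∑' (c n - c (n+1)) = c 0 = 1/x^m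
lemma tsum_telescope_inv_pow {m : ℕ} (hm : 1 ≤ m) {x : ℝ} (hx : 0 < x) :
    HasSum (fun n : ℕ => 1 / ((n : ℝ) + x) ^ m - 1 / ((n : ℝ) + 1 + x) ^ m) (1 / x ^ m) := by
  set c : ℕ → ℝ := fun n => 1 / ((n : ℝ) + x) ^ m with hc
  have hmono : ∀ n : ℕ, c (n + 1) ≤ c n := by
    intro n
    apply one_div_le_one_div_of_le (by positivity)
    apply pow_le_pow_left₀ (by positivity)
    push_cast; linarith
  have hpart : ∀ N : ℕ, ∑ n ∈ Finset.range N, (c n - c (n + 1)) = c 0 - c N :=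
    fun N => Finset.sum_range_sub' c N
  have hlim : Filter.Tendsto c Filter.atTop (nhds 0) := by
    have h1 : Filter.Tendsto (fun n : ℕ => ((n : ℝ) + x) ^ m) Filter.atTop Filter.atTop := by
      exact (tendsto_pow_atTop (by omega)).comp
        (Filter.tendsto_atTop_add_const_right _ x tendsto_natCast_atTop_atTop)
    simpa [hc, Pi.inv_def] using h1.inv_tendsto_atTop
  have hsum : Summable (fun n : ℕ => c n - c (n + 1)) := by
    apply summable_of_sum_range_le (c := c 0) (fun n => by linarith [hmono n])
    intro n; rw [hpart]
    have : 0 ≤ c n := by rw [hc]; positivity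
    linarith
  have ht := hsum.hasSum
  have h2 := ht.tendsto_sum_nat
  have h3 : Filter.Tendsto (fun N => ∑ n ∈ Finset.range N, (c n - c (n + 1)))
      Filter.atTop (nhds (c 0 - 0)) := by
    simp_rw [hpart]
    exact Filter.Tendsto.const_sub _ hlim
  have : ∑' n, (c n - c (n+1)) = c 0 - 0 := tendsto_nhds_unique h2 h3
  rw [this] at ht
  have hc0 : c 0 - 0 = 1 / x ^ m := by simp [hc]
  rw [hc0] at ht
  convert ht using 2 with n
  push_cast [hc]
  ring_nf

lemma P_mul_upper {m : ℕ} (hm : 1 ≤ m) {x : ℝ} (hx : 0 < x) :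
    (m : ℝ) * P (m + 1) (x + 1) < 1 / x ^ m := by
  have hsum1 : Summable (fun n : ℕ => (m:ℝ) * (1 / ((n : ℝ) + (x+1)) ^ (m+1))) :=
    (P_summable (by omega) (by linarith)).mul_left _
  have htel := tsum_telescope_inv_pow hm hx
  have hle : ∀ n : ℕ, (m:ℝ) * (1 / ((n : ℝ) + (x+1)) ^ (m+1)) <
      1 / ((n : ℝ) + x) ^ m - 1 / ((n : ℝ) + 1 + x) ^ m := by
    intro n
    have hnx : (0:ℝ) < (n:ℝ) + x := by positivity
    have := (pow_inv_diff_bounds hnx (by linarith : (n:ℝ) + x < (n:ℝ) + x + 1) m hm).1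
    have e1 : ((n:ℝ) + x + 1) - ((n:ℝ) + x) = 1 := by ring
    rw [e1, mul_one] at this
    have e2 : (n:ℝ) + (x + 1) = (n:ℝ) + x + 1 := by ring
    have e3 : (n:ℝ) + 1 + x = (n:ℝ) + x + 1 := by ring
    rw [e2, e3]
    calc (m:ℝ) * (1 / ((n:ℝ) + x + 1) ^ (m+1)) = (m:ℝ) / ((n:ℝ) + x + 1) ^ (m+1) := by ring
    _ < _ := this
  have := Summable.tsum_lt_tsum (f := fun n : ℕ => (m:ℝ) * (1 / ((n : ℝ) + (x+1)) ^ (m+1)))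
    (fun n => (hle n).le) (hle 0) hsum1 htel.summable
  rw [htel.tsum_eq, tsum_mul_left] at this
  exact this

lemma P_mul_lower {m : ℕ} (hm : 1 ≤ m) {x : ℝ} (hx : 0 < x) :
    1 / x ^ m ≤ (m : ℝ) * P (m + 1) x := by
  have hsum1 : Summable (fun n : ℕ => (m:ℝ) * (1 / ((n : ℝ) + x) ^ (m+1))) :=
    (P_summable (by omega) hx).mul_left _
  have htel := tsum_telescope_inv_pow hm hx
  have hle : ∀ n : ℕ, 1 / ((n : ℝ) + x) ^ m - 1 / ((n : ℝ) + 1 + x) ^ m ≤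
      (m:ℝ) * (1 / ((n : ℝ) + x) ^ (m+1)) := by
    intro n
    have hnx : (0:ℝ) < (n:ℝ) + x := by positivity
    have := (pow_inv_diff_bounds hnx (by linarith : (n:ℝ) + x < (n:ℝ) + x + 1) m hm).2
    have e1 : ((n:ℝ) + x + 1) - ((n:ℝ) + x) = 1 := by ring
    rw [e1, mul_one] at this
    have e3 : (n:ℝ) + 1 + x = (n:ℝ) + x + 1 := by ring
    rw [e3]
    calc 1 / ((n:ℝ) + x)^m - 1 / ((n:ℝ)+x+1)^m ≤ (m:ℝ) / ((n:ℝ) + x) ^ (m+1) := this.le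
    _ = (m:ℝ) * (1 / ((n:ℝ) + x) ^ (m+1)) := by ring
  have := Summable.tsum_le_tsum hle htel.summable hsum1
  rw [htel.tsum_eq, tsum_mul_left] at this
  exact this

noncomputable def phi (i : ℕ) (x : ℝ) : ℝ :=
  (i : ℝ) * P (i + 1) x - ((i : ℝ) + 1) * x * P (i + 2) x

lemma phi_step {i : ℕ} (hi : 1 ≤ i) {x : ℝ} (hx : 0 < x) : phi i x < phi i (x + 1) := by
  have h1 := P_shift (m := i + 1) (by omega) hx
  have h2 := P_shift (m := i + 2) (by omega) hx
  have h3 := P_mul_upper (m := i + 1) (by omega) hx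
  push_cast at h3
  rw [show i + 1 + 1 = i + 2 from rfl] at h3
  have e1 : ((i:ℝ)+1) * (x * (1 / x ^ (i + 2))) = ((i:ℝ)+1) * (1 / x ^ (i + 1)) := by
    rw [pow_succ]; field_simp
  unfold phi
  rw [h1, h2]
  nlinarith [h3, e1]

lemma phi_bounds {i : ℕ} (hi : 1 ≤ i) {y : ℝ} (hy : 0 < y) :
    -(((i : ℝ) + 1) * (1 / y ^ (i + 1))) < phi i y ∧ phi i y < (i : ℝ) * (1 / y ^ (i + 1)) := by
  have h1 := P_shift (m := i + 1) (by omega) hy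
  have h2 := P_shift (m := i + 2) (by omega) hy
  have hupi := P_mul_upper (m := i) hi hy      -- i * P (i+1) (y+1) < 1 / y^i
  have hupi1 := P_mul_upper (m := i + 1) (by omega) hy -- (i+1) * P (i+2) (y+1) < 1/y^(i+1)
  have hloi1 := P_mul_lower (m := i + 1) (by omega) hy -- 1/y^(i+1) ≤ (i+1) * P (i+2) y
  have hloi := P_mul_lower (m := i) hi hy       -- 1/y^i ≤ i * P (i+1) y
  push_cast at hupi hupi1 hloi1 hloi
  rw [show i + 1 + 1 = i + 2 from rfl] at hupi1 hloi1
  have e1 : y * (1 / y ^ (i + 1)) = 1 / y ^ i := by rw [pow_succ]; field_simp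
  have e2 : ((i:ℝ)+1) * (y * (1 / y ^ (i + 2))) = ((i:ℝ)+1) * (1 / y ^ (i + 1)) := by
    rw [pow_succ]; field_simp
  have hyi : (0:ℝ) < 1 / y ^ (i+1) := by positivity
  have hA := mul_lt_mul_of_pos_left hupi1 hy
  have hB := mul_le_mul_of_nonneg_left hloi1 hy.le
  have h2' : ((i:ℝ)+1) * y * P (i+2) y
      = ((i:ℝ)+1) * (y * (1/y^(i+2))) + y * (((i:ℝ)+1) * P (i+2) (y+1)) := by
    rw [h2]; ring
  have h1' : (i:ℝ) * P (i+1) y = (i:ℝ) * (1/y^(i+1)) + (i:ℝ) * P (i+1) (y+1) := by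
    rw [h1]; ring
  constructor
  · unfold phi
    set E := 1 / y ^ (i+1)
    set F := 1 / y ^ i
    linarith [hloi, hA, h2', e2, e1]
  · unfold phi
    set E := 1 / y ^ (i+1)
    set F := 1 / y ^ i
    linarith [hupi, h1', hB, e1]

lemma phi_mono {i : ℕ} (hi : 1 ≤ i) {x : ℝ} (hx : 0 < x) (K : ℕ) :
    phi i x < phi i (x + (K + 1 : ℕ)) := by
  induction K with
  | zero => simpa using phi_step hi hx
  | succ k ih =>
      have h2 : phi i (x + (k + 1 : ℕ)) < phi i (x + (k + 1 : ℕ) + 1) :=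
        phi_step hi (by positivity)
      have e : x + (k + 1 : ℕ) + 1 = x + (k + 2 : ℕ) := by push_cast; ring
      rw [e] at h2
      exact ih.trans h2

lemma phi_tendsto {i : ℕ} (hi : 1 ≤ i) {x : ℝ} (hx : 0 < x) :
    Filter.Tendsto (fun K : ℕ => phi i (x + K)) Filter.atTop (nhds 0) := by
  have hbase : Filter.Tendsto (fun K : ℕ => (x + (K:ℝ)) ^ (i+1)) Filter.atTop Filter.atTop :=
    (tendsto_pow_atTop (by omega)).comp
      (Filter.tendsto_atTop_add_const_left _ x tendsto_natCast_atTop_atTop)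
  have hz : Filter.Tendsto (fun K : ℕ => 1 / (x + (K:ℝ)) ^ (i+1)) Filter.atTop (nhds 0) := by
    simpa [Pi.inv_def] using hbase.inv_tendsto_atTop
  have hz1 : Filter.Tendsto (fun K : ℕ => (i:ℝ) * (1 / (x + (K:ℝ)) ^ (i+1)))
      Filter.atTop (nhds 0) := by simpa using hz.const_mul (i:ℝ)
  have hz2 : Filter.Tendsto (fun K : ℕ => -(((i:ℝ)+1) * (1 / (x + (K:ℝ)) ^ (i+1))))
      Filter.atTop (nhds 0) := by simpa using (hz.const_mul ((i:ℝ)+1)).neg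
  apply tendsto_of_tendsto_of_tendsto_of_le_of_le hz2 hz1
  · intro K
    exact (phi_bounds hi (y := x + K) (by positivity)).1.le
  · intro K
    exact (phi_bounds hi (y := x + K) (by positivity)).2.le

lemma phi_neg {i : ℕ} (hi : 1 ≤ i) {x : ℝ} (hx : 0 < x) : phi i x < 0 := by
  have h1 : phi i (x + 1) ≤ 0 := by
    apply ge_of_tendsto (phi_tendsto hi (x := x + 1) (by positivity))
    filter_upwards [Filter.eventually_ge_atTop 1] with K hK
    have := phi_mono hi (x := x + 1) (by positivity) (K - 1)
    rw [show (K - 1 + 1 : ℕ) = K by omega] at this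
    exact this.le
  exact (phi_step hi hx).trans_le h1

lemma hasDerivAt_inv_pow_shift (m : ℕ) (hm : 1 ≤ m) (c : ℝ) {y : ℝ} (hy : 0 < c + y) :
    HasDerivAt (fun y : ℝ => 1 / (c + y) ^ m) (-((m : ℝ) * (1 / (c + y) ^ (m + 1)))) y := by
  have h0 := hasDerivAt_neg_inv_pow m hm hy
  have h1 : HasDerivAt (fun y : ℝ => c + y) 1 y := (hasDerivAt_id y).const_add c
  have h2 := (HasDerivAt.comp y h0 h1).neg
  simp only [Function.comp_def, mul_one, neg_neg, Pi.neg_def] at h2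
  rw [show -((m : ℝ) * (1 / (c + y) ^ (m + 1))) = -((m:ℝ) / (c + y) ^ (m+1)) by
    rw [mul_one_div]]
  exact h2

lemma hasDerivAt_P {m : ℕ} (hm : 2 ≤ m) {x : ℝ} (hx : 0 < x) :
    HasDerivAt (P m) (-((m : ℝ) * P (m + 1) x)) x := by
  have h2x : 0 < x / 2 := by linarith
  have key := hasDerivAt_tsum_of_isPreconnected
    (u := fun n : ℕ => (m:ℝ) * (1 / ((n : ℝ) + x/2) ^ (m+1)))
    (g := fun (n : ℕ) (y : ℝ) => 1 / ((n : ℝ) + y) ^ m)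
    (g' := fun (n : ℕ) (y : ℝ) => -((m : ℝ) * (1 / ((n : ℝ) + y) ^ (m + 1))))
    (t := Set.Ioi (x/2)) (y₀ := x) (y := x)
    ((P_summable (by omega) h2x).mul_left _) isOpen_Ioi (isPreconnected_Ioi)
    (fun n y hy => hasDerivAt_inv_pow_shift m (by omega) n (by
      have : x/2 < y := hy
      have := Nat.cast_nonneg (α := ℝ) n
      linarith))
    (fun n y hy => by
      have hy' : x/2 < y := hy
      have hn : (0:ℝ) ≤ n := Nat.cast_nonneg n
      have hbase : (0:ℝ) < (n:ℝ) + x/2 := by positivity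
      have hny : (0:ℝ) < ((n:ℝ) + y) ^ (m+1) := pow_pos (by linarith) _
      rw [norm_neg, Real.norm_eq_abs,
        abs_of_nonneg (mul_nonneg (Nat.cast_nonneg m) (one_div_nonneg.mpr hny.le))]
      have hle : ((n:ℝ) + x/2) ^ (m+1) ≤ ((n:ℝ) + y) ^ (m+1) :=
        pow_le_pow_left₀ hbase.le (by linarith) _
      exact mul_le_mul_of_nonneg_left
        (one_div_le_one_div_of_le (pow_pos hbase _) hle) (by positivity))
    (Set.mem_Ioi.mpr (by linarith))
    (P_summable hm hx)
    (Set.mem_Ioi.mpr (by linarith))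
  have : ∑' n : ℕ, -((m : ℝ) * (1 / ((n : ℝ) + x) ^ (m + 1))) = -((m : ℝ) * P (m + 1) x) := by
    rw [tsum_neg, tsum_mul_left]; rfl
  rw [this] at key
  exact key

noncomputable def S (x : ℝ) : ℝ := ∑' n : ℕ, (1 / ((n : ℝ) + 1) - 1 / ((n : ℝ) + x))

lemma S_summable {x : ℝ} (hx : 0 < x) :
    Summable (fun n : ℕ => 1 / ((n : ℝ) + 1) - 1 / ((n : ℝ) + x)) := by
  set a := min x 1 with ha
  have ha0 : 0 < a := lt_min hx one_pos
  have key : Summable (fun n : ℕ => (|x - 1| / a) * (1 / ((n : ℝ) + 1) ^ 2)) := by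
    apply Summable.mul_left
    have := Real.summable_one_div_nat_pow.mpr (le_refl 2)
    exact_mod_cast (summable_nat_add_iff 1).mpr this
  apply Summable.of_abs
  apply key.of_nonneg_of_le (fun n => abs_nonneg _)
  intro n
  have hn : (0:ℝ) ≤ n := Nat.cast_nonneg n
  have h1 : 1 / ((n : ℝ) + 1) - 1 / ((n : ℝ) + x) = (x - 1) / (((n:ℝ) + 1) * ((n:ℝ) + x)) := by
    field_simp; ring
  have hn1 : (0:ℝ) < (n:ℝ) + 1 := by positivity
  have hnx : (0:ℝ) < (n:ℝ) + x := by linarith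
  have hale : a * ((n:ℝ) + 1) ≤ (n:ℝ) + x := by
    rcases le_total x 1 with h | h
    · have hax : a = x := min_eq_left h
      rw [hax]; nlinarith
    · have hax : a = 1 := min_eq_right h
      rw [hax]; nlinarith
  have hpos2 : (0:ℝ) < a * ((n:ℝ)+1) := mul_pos ha0 hn1
  rw [h1, abs_div, abs_of_nonneg (mul_pos hn1 hnx).le, div_le_iff₀ (mul_pos hn1 hnx)]
  calc |x-1| = |x-1| * 1 := (mul_one _).symm
  _ ≤ |x-1| * ((((n:ℝ)+x)) / (a * ((n:ℝ)+1))) := by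
      apply mul_le_mul_of_nonneg_left _ (abs_nonneg _)
      rw [le_div_iff₀ hpos2]
      linarith
  _ = |x-1| / a * (1/((n:ℝ)+1)^2) * (((n:ℝ)+1)*((n:ℝ)+x)) := by field_simp

lemma hasDerivAt_S {x : ℝ} (hx : 0 < x) : HasDerivAt S (P 2 x) x := by
  set a := min (x/2) (1/2) with ha
  have ha0 : 0 < a := lt_min (by linarith) one_half_pos
  have hax : a < x := (min_le_left _ _).trans_lt (by linarith)
  have key := hasDerivAt_tsum_of_isPreconnected
    (u := fun n : ℕ => 1 / ((n : ℝ) + a) ^ 2)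
    (g := fun (n : ℕ) (y : ℝ) => 1 / ((n : ℝ) + 1) - 1 / ((n : ℝ) + y))
    (g' := fun (n : ℕ) (y : ℝ) => 1 / ((n : ℝ) + y) ^ 2)
    (t := Set.Ioi a) (y₀ := x) (y := x)
    (P_summable (le_refl 2) ha0) isOpen_Ioi isPreconnected_Ioi
    (fun n y hy => by
      have hy' : a < y := hy
      have hn : (0:ℝ) ≤ n := Nat.cast_nonneg n
      have h0 := (hasDerivAt_inv_pow_shift 1 (le_refl 1) n (by linarith : 0 < (n:ℝ) + y)).neg
      have h1 := h0.const_add (1 / ((n : ℝ) + 1))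
      have e2 : (fun x : ℝ => 1 / ((n:ℝ) + 1) + -(1 / ((n:ℝ) + x) ^ 1))
          = (fun x : ℝ => 1 / ((n:ℝ) + 1) - 1 / ((n:ℝ) + x)) := by
        ext t; rw [pow_one]; ring
      simp only [Pi.neg_apply] at h1
      rw [e2] at h1
      convert h1 using 1
      push_cast
      norm_num)
    (fun n y hy => by
      have hy' : a < y := hy
      have hn : (0:ℝ) ≤ n := Nat.cast_nonneg n
      have hbase : (0:ℝ) < (n:ℝ) + a := by linarith
      rw [Real.norm_eq_abs, abs_of_nonneg (by positivity)]
      have hle : ((n:ℝ) + a) ^ 2 ≤ ((n:ℝ) + y) ^ 2 :=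
        pow_le_pow_left₀ hbase.le (by linarith) _
      exact one_div_le_one_div_of_le (pow_pos hbase _) hle)
    (Set.mem_Ioi.mpr hax) (S_summable hx) (Set.mem_Ioi.mpr hax)
  exact key

open Real in
lemma harmonic_real (n : ℕ) : ((harmonic n : ℚ) : ℝ) = ∑ m ∈ Finset.range n, (1 / ((m:ℝ) + 1)) := by
  unfold harmonic
  push_cast
  exact Finset.sum_congr rfl (fun m _ => by rw [one_div])

open Real in
lemma c_tendsto : Filter.Tendsto
    (fun n : ℕ => Real.log n - ∑ m ∈ Finset.range (n+1), (1/((m:ℝ)+1)))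
    Filter.atTop (nhds (-Real.eulerMascheroniConstant)) := by
  have h1 : Filter.Tendsto (fun n : ℕ => ((harmonic (n+1) : ℚ) : ℝ) - Real.log (n+1))
      Filter.atTop (nhds Real.eulerMascheroniConstant) := by
    have := Real.tendsto_eulerMascheroniSeq'.comp (Filter.tendsto_add_atTop_nat 1)
    apply this.congr
    intro n
    simp [Real.eulerMascheroniSeq', Function.comp, Nat.cast_add]
  have h2 : Filter.Tendsto (fun n : ℕ => Real.log ((n:ℝ)+1) - Real.log n)
      Filter.atTop (nhds 0) := by
    have hbase : Filter.Tendsto (fun n : ℕ => 1 + 1/(n:ℝ)) Filter.atTop (nhds 1) := by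
      simpa using tendsto_const_nhds.add (tendsto_one_div_atTop_nhds_zero_nat (𝕜 := ℝ))
    have hlog := (Real.continuousAt_log one_ne_zero).tendsto.comp hbase
    rw [Real.log_one] at hlog
    apply hlog.congr'
    filter_upwards [Filter.eventually_ge_atTop 1] with n hn
    have hn0 : (0:ℝ) < n := by exact_mod_cast hn
    rw [Function.comp_apply, ← Real.log_div (by positivity) hn0.ne']
    congr 1
    field_simp
  have h3 := (h1.add h2).neg
  rw [add_zero] at h3
  apply h3.congr
  intro n
  rw [harmonic_real]
  ring

noncomputable def dg (x : ℝ) : ℝ := -Real.eulerMascheroniConstant + S x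

lemma tlu : TendstoLocallyUniformlyOn
    (fun (n : ℕ) (y : ℝ) => Real.log n - ∑ m ∈ Finset.range (n+1), 1/(y+(m:ℝ)))
    dg Filter.atTop (Set.Ioi 0) := by
  rw [tendstoLocallyUniformlyOn_iff_forall_isCompact isOpen_Ioi]
  intro K hK hKc
  rcases K.eq_empty_or_nonempty with rfl | hne
  · exact tendstoUniformlyOn_empty
  set a := sInf K with haa
  set b := sSup K with hbb
  have haK : a ∈ K := hKc.sInf_mem hne
  have ha : 0 < a := hK haK
  have hsub : K ⊆ Set.Icc a b := fun y hy =>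
    ⟨csInf_le hKc.bddBelow hy, le_csSup hKc.bddAbove hy⟩
  apply TendstoUniformlyOn.mono _ hsub
  have hab : a ≤ b := (hsub haK).2
  set a' := min a 1 with ha'
  have ha'0 : 0 < a' := lt_min ha one_pos
  -- part 2 : series part
  have hu : Summable (fun m : ℕ => ((b+1)/a') * (1 / ((m:ℝ)+1)^2)) := by
    apply Summable.mul_left
    have := Real.summable_one_div_nat_pow.mpr (le_refl 2)
    exact_mod_cast (summable_nat_add_iff 1).mpr this
  have hbound : ∀ (m : ℕ) (y : ℝ), y ∈ Set.Icc a b →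
      ‖1 / ((m:ℝ) + 1) - 1 / ((m:ℝ) + y)‖ ≤ ((b+1)/a') * (1 / ((m:ℝ)+1)^2) := by
    intro m y hy
    have hm : (0:ℝ) ≤ m := Nat.cast_nonneg m
    have hy0 : 0 < y := ha.trans_le hy.1
    have hm1 : (0:ℝ) < (m:ℝ) + 1 := by positivity
    have hmy : (0:ℝ) < (m:ℝ) + y := by linarith
    have h1 : 1 / ((m : ℝ) + 1) - 1 / ((m : ℝ) + y) = (y - 1) / (((m:ℝ) + 1) * ((m:ℝ) + y)) := by
      field_simp; ring
    have hya : a' ≤ y := le_trans (min_le_left a 1) hy.1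
    have hale : a' * ((m:ℝ) + 1) ≤ (m:ℝ) + y := by
      have h1' : a' ≤ 1 := min_le_right a 1
      nlinarith
    have hnum : |y - 1| ≤ b + 1 := by
      rw [abs_le]
      constructor <;> nlinarith [hy.2, hy.1]
    rw [Real.norm_eq_abs, h1, abs_div, abs_of_nonneg (mul_pos hm1 hmy).le,
      div_le_iff₀ (mul_pos hm1 hmy)]
    calc |y - 1| ≤ b + 1 := hnum
    _ = (b+1) * 1 := (mul_one _).symm
    _ ≤ (b+1) * (((m:ℝ)+y) / (a' * ((m:ℝ)+1))) := by
        apply mul_le_mul_of_nonneg_left _ (by linarith : (0:ℝ) ≤ b + 1)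
        rw [le_div_iff₀ (mul_pos ha'0 hm1)]
        linarith
    _ = ((b+1)/a') * (1/((m:ℝ)+1)^2) * (((m:ℝ)+1)*((m:ℝ)+y)) := by field_simp
  have H2 := tendstoUniformlyOn_tsum_nat hu hbound
  have H2' : TendstoUniformlyOn
      (fun (n : ℕ) (y : ℝ) => ∑ m ∈ Finset.range (n+1), (1 / ((m:ℝ) + 1) - 1 / ((m:ℝ) + y)))
      S Filter.atTop (Set.Icc a b) := by
    intro v hv
    exact (Filter.tendsto_add_atTop_nat 1).eventually (H2 v hv)
  -- part 1 : constants
  have H1 : TendstoUniformlyOn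
      (fun (n : ℕ) (_ : ℝ) => Real.log n - ∑ m ∈ Finset.range (n+1), (1/((m:ℝ)+1)))
      (fun _ => -Real.eulerMascheroniConstant) Filter.atTop (Set.Icc a b) := by
    rw [Metric.tendstoUniformlyOn_iff]
    intro ε hε
    have := (Metric.tendsto_nhds.mp c_tendsto) ε hε
    filter_upwards [this] with n hn y _
    rw [dist_comm] at hn
    exact hn
  have hfinal := H1.add H2'
  have heq : ∀ᶠ n in Filter.atTop, Set.EqOn
      ((fun (n : ℕ) (_ : ℝ) => Real.log n - ∑ m ∈ Finset.range (n+1), (1/((m:ℝ)+1))) n +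
       (fun (n : ℕ) (y : ℝ) =>
         ∑ m ∈ Finset.range (n+1), (1 / ((m:ℝ) + 1) - 1 / ((m:ℝ) + y))) n)
      (fun y : ℝ => Real.log n - ∑ m ∈ Finset.range (n+1), 1/(y+(m:ℝ)))
      (Set.Icc a b) := by
    apply Filter.Eventually.of_forall
    intro n y _
    simp only [Pi.add_apply]
    rw [Finset.sum_sub_distrib]
    have : ∑ m ∈ Finset.range (n+1), 1 / ((m:ℝ) + y)
        = ∑ m ∈ Finset.range (n+1), 1 / (y + (m:ℝ)) :=
      Finset.sum_congr rfl (fun m _ => by rw [add_comm])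
    rw [this]
    ring
  have hfinal2 := hfinal.congr heq
  have hdg : (fun y : ℝ => -Real.eulerMascheroniConstant + S y) = dg := rfl
  have : ((fun _ : ℝ => -Real.eulerMascheroniConstant) + S) = dg := by
    ext y; simp [dg]
  rw [this] at hfinal2
  exact hfinal2

lemma hasDerivAt_logGammaSeq (n : ℕ) {y : ℝ} (hy : 0 < y) :
    HasDerivAt (fun y : ℝ => Real.BohrMollerup.logGammaSeq y n)
      (Real.log n - ∑ m ∈ Finset.range (n+1), 1/(y+(m:ℝ))) y := by
  unfold Real.BohrMollerup.logGammaSeq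
  have h1 : HasDerivAt (fun y : ℝ => y * Real.log n + Real.log (Nat.factorial n))
      (Real.log n) y := by
    simpa using ((hasDerivAt_id y).mul_const (Real.log n)).add_const (Real.log (Nat.factorial n))
  have h2 : HasDerivAt (fun y : ℝ => ∑ m ∈ Finset.range (n+1), Real.log (y + (m:ℝ)))
      (∑ m ∈ Finset.range (n+1), 1/(y+(m:ℝ))) y := by
    apply HasDerivAt.fun_sum
    intro m _
    have hm : (0:ℝ) ≤ m := Nat.cast_nonneg m
    have hym : y + (m:ℝ) ≠ 0 := by positivity
    have := ((hasDerivAt_id y).add_const (m:ℝ)).log hym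
    simpa [one_div] using this
  exact h1.sub h2

lemma hasDerivAt_logGamma {x : ℝ} (hx : 0 < x) :
    HasDerivAt (fun y : ℝ => Real.log (Real.Gamma y)) (dg x) x := by
  apply hasDerivAt_of_tendstoLocallyUniformlyOn isOpen_Ioi tlu
    (Filter.Eventually.of_forall (fun n y hy => hasDerivAt_logGammaSeq n hy))
    (fun y hy => Real.BohrMollerup.tendsto_log_gamma hy) hx

lemma digamma_eq {x : ℝ} (hx : 0 < x) : digamma x = dg x := (hasDerivAt_logGamma hx).deriv

lemma hasDerivAt_dg {x : ℝ} (hx : 0 < x) : HasDerivAt dg (P 2 x) x :=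
  (hasDerivAt_S hx).const_add (-Real.eulerMascheroniConstant)

lemma polygamma_eq (j : ℕ) : ∀ x > 0, polygamma (j+1) x
    = (-1:ℝ)^j * (Nat.factorial (j+1)) * P (j+2) x := by
  induction j with
  | zero =>
      intro x hx
      have hev : digamma =ᶠ[nhds x] dg := by
        filter_upwards [isOpen_Ioi.mem_nhds (Set.mem_Ioi.mpr hx)] with y hy
        exact digamma_eq hy
      have : polygamma 1 x = deriv digamma x := by rw [polygamma, iteratedDeriv_one]
      rw [this, hev.deriv_eq, (hasDerivAt_dg hx).deriv]
      norm_num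
  | succ k ih =>
      intro x hx
      have hev : polygamma (k+1) =ᶠ[nhds x]
          (fun y => (-1:ℝ)^k * (Nat.factorial (k+1)) * P (k+2) y) := by
        filter_upwards [isOpen_Ioi.mem_nhds (Set.mem_Ioi.mpr hx)] with y hy
        exact ih y hy
      have h1 : polygamma (k+2) x = deriv (polygamma (k+1)) x := by
        rw [polygamma, polygamma, iteratedDeriv_succ]
      have h2 : HasDerivAt (fun y => (-1:ℝ)^k * (Nat.factorial (k+1)) * P (k+2) y)
          (((-1:ℝ)^k * (Nat.factorial (k+1))) * (-(((k:ℝ)+2) * P (k+3) x))) x := by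
        have := (hasDerivAt_P (m := k+2) (by omega) hx).const_mul
          ((-1:ℝ)^k * (Nat.factorial (k+1)))
        push_cast at this ⊢
        convert this using 2
      rw [h1, hev.deriv_eq, h2.deriv]
      have : (Nat.factorial (k+2) : ℝ) = ((k:ℝ)+2) * (Nat.factorial (k+1)) := by
        rw [Nat.factorial_succ]; push_cast; ring
      rw [this]
      ring

lemma abs_polygamma {i : ℕ} (hi : 1 ≤ i) {x : ℝ} (hx : 0 < x) :
    |polygamma i x| = (Nat.factorial i) * P (i+1) x := by
  obtain ⟨j, rfl⟩ := Nat.exists_eq_add_of_le hi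
  have := polygamma_eq j x hx
  rw [show 1 + j = j + 1 by ring] at *
  rw [this, abs_mul, abs_mul, abs_pow, abs_neg, abs_one, one_pow, one_mul,
    abs_of_nonneg (by positivity : (0:ℝ) ≤ (Nat.factorial (j+1) : ℝ)),
    abs_of_pos (P_pos (by omega) hx)]

lemma hasDerivAt_G {i : ℕ} (hi : 1 ≤ i) {x : ℝ} (hx : 0 < x) :
    HasDerivAt (fun x : ℝ => x ^ (i:ℝ) * P (i+1) x)
      (x ^ ((i:ℝ)-1) * phi i x) x := by
  have h1 : HasDerivAt (fun x : ℝ => x ^ (i:ℝ)) ((i:ℝ) * x ^ ((i:ℝ)-1)) x :=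
    Real.hasDerivAt_rpow_const (Or.inl hx.ne')
  have h2 := h1.mul (hasDerivAt_P (m := i+1) (by omega) hx)
  have e : x ^ (i:ℝ) = x ^ ((i:ℝ)-1) * x := by
    rw [← Real.rpow_add_one hx.ne']; norm_num
  refine h2.congr_deriv (Eq.symm ?_)
  unfold phi
  rw [e]
  push_cast
  ring_nf

lemma strictAntiOn_G {i : ℕ} (hi : 1 ≤ i) :
    StrictAntiOn (fun x : ℝ => x ^ (i:ℝ) * P (i+1) x) (Set.Ioi 0) := by
  apply strictAntiOn_of_deriv_neg (convex_Ioi 0)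
  · intro x hx
    exact (hasDerivAt_G hi hx).continuousAt.continuousWithinAt
  · intro x hx
    rw [interior_Ioi] at hx
    rw [(hasDerivAt_G hi hx).deriv]
    exact mul_neg_of_pos_of_neg (Real.rpow_pos_of_pos hx _) (phi_neg hi hx)

theorem stmt3 (i : ℕ) (hi : 0 < i) (α : ℝ) :
    StrictAntiOn (fun x : ℝ => x ^ α * |polygamma i x|) (Set.Ioi 0) ↔ α ≤ (i : ℝ) := by
  have hi1 : 1 ≤ i := hi
  constructor
  · intro hSA
    by_contra hα
    push_neg at hα
    set c := ((Nat.factorial (i-1) : ℕ) : ℝ) with hc_def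
    have hc : 0 < c := by positivity
    have htend : Filter.Tendsto (fun y : ℝ => c * y ^ (α - (i:ℝ)))
        Filter.atTop Filter.atTop :=
      (tendsto_rpow_atTop (by linarith)).const_mul_atTop hc
    obtain ⟨y, hy1, hy2⟩ := ((htend.eventually_gt_atTop
      ((1:ℝ) ^ α * |polygamma i 1|)).and (Filter.eventually_gt_atTop (1:ℝ))).exists
    have hy0 : (0:ℝ) < y := by linarith
    have hlow : c * y ^ (α - (i:ℝ)) ≤ y ^ α * |polygamma i y| := by
      rw [abs_polygamma hi1 hy0]
      have h1 := P_mul_lower (m := i) hi1 hy0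
      have hfac : ((Nat.factorial i : ℕ) : ℝ) = c * (i:ℝ) := by
        rw [hc_def, ← Nat.cast_mul, ← Nat.mul_factorial_pred hi.ne', Nat.mul_comm]
      have h2 : c / y ^ i ≤ ((Nat.factorial i : ℕ) : ℝ) * P (i+1) y := by
        rw [hfac, mul_assoc]
        calc c / y ^ i = c * (1 / y ^ i) := by ring
        _ ≤ c * ((i:ℝ) * P (i+1) y) := mul_le_mul_of_nonneg_left h1 hc.le
      have hys : y ^ (α - (i:ℝ)) = y ^ α / y ^ i := by
        rw [Real.rpow_sub hy0, Real.rpow_natCast]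
      calc c * y ^ (α - (i:ℝ)) = y ^ α * (c / y ^ i) := by rw [hys]; ring
      _ ≤ y ^ α * (((Nat.factorial i : ℕ) : ℝ) * P (i+1) y) :=
          mul_le_mul_of_nonneg_left h2 (Real.rpow_nonneg hy0.le α)
    have hfy := hSA (Set.mem_Ioi.mpr one_pos) (Set.mem_Ioi.mpr hy0) hy2
    simp only at hfy
    linarith
  · intro hα x hx y hy hxy
    have hx0 : (0:ℝ) < x := hx
    have hy0 : (0:ℝ) < y := hy
    simp only
    rw [abs_polygamma hi1 hy0, abs_polygamma hi1 hx0]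
    have hG : y ^ (i:ℝ) * P (i+1) y < x ^ (i:ℝ) * P (i+1) x := strictAntiOn_G hi1 hx hy hxy
    have hGy : 0 < y ^ (i:ℝ) * P (i+1) y :=
      mul_pos (Real.rpow_pos_of_pos hy0 _) (P_pos (by omega) hy0)
    have hexp : y ^ (α - (i:ℝ)) ≤ x ^ (α - (i:ℝ)) :=
      Real.rpow_le_rpow_of_nonpos hx0 hxy.le (by linarith)
    have esplit : ∀ z : ℝ, 0 < z → z ^ α * (((Nat.factorial i : ℕ):ℝ) * P (i+1) z)
        = ((Nat.factorial i : ℕ):ℝ) * (z ^ (α - (i:ℝ)) * (z ^ (i:ℝ) * P (i+1) z)) := by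
      intro z hz
      have h := Real.rpow_add hz (α - (i:ℝ)) (i:ℝ)
      rw [show α - (i:ℝ) + (i:ℝ) = α by ring] at h
      rw [h]; ring
    rw [esplit y hy0, esplit x hx0]
    have hfacpos : (0:ℝ) < ((Nat.factorial i : ℕ):ℝ) := by positivity
    apply mul_lt_mul_of_pos_left _ hfacpos
    calc y ^ (α - (i:ℝ)) * (y ^ (i:ℝ) * P (i+1) y)
        ≤ x ^ (α - (i:ℝ)) * (y ^ (i:ℝ) * P (i+1) y) :=
          mul_le_mul_of_nonneg_right hexp hGy.le
    _ < x ^ (α - (i:ℝ)) * (x ^ (i:ℝ) * P (i+1) x) :=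
          mul_lt_mul_of_pos_left hG (Real.rpow_pos_of_pos hx0 _)
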